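/- Let G = A *_C B be an amalgamated free product of groups A and B over a common subgroup C. Then any product of elements whose successive terms lie alternately in A \ C and B \ C lies outside of C. -/

import Mathlib

open Monoid PushoutI

/-- Let `G = A *_C B` be an amalgamated free product of the groups
`A = G true` and `B = G false` over a common subgroup `C` (embedded by the injective maps
`φ i`).  Any nonempty product of elements whose successive terms lie alternately in
`A \ C` and `B \ C` lies outside of `C` (all identified with their images in `G`). -/
theorem stmt_0 {C : Type*} {G : Bool → Type*} [Group C] [∀ i, Group (G i)]
    (φ : ∀ i, C →* G i) (hφ : ∀ i, Function.Injective (φ i))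
    (L : List (PushoutI φ)) (c : List Bool) (hne : L ≠ [])
    (hlen : L.length = c.length) (halt : c.Chain' (· ≠ ·))
    (hmem : ∀ k : Fin L.length,
      L.get k ∈ Set.range (of (φ := φ) (c.get (Fin.cast hlen k))) \
        Set.range (base φ)) :
    L.prod ∉ Set.range (base φ) := by
  classical
  intro hC
  choose g hg using fun k : Fin L.length => (hmem k).1
  have hg2 : ∀ k : Fin L.length, L.get k ∉ Set.range (base φ) := fun k => (hmem k).2
  have hgnr : ∀ k : Fin L.length, g k ∉ (φ (c.get (Fin.cast hlen k))).range := by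
    intro k ⟨x, hx⟩
    exact hg2 k ⟨x, by rw [← of_apply_eq_base φ (c.get (Fin.cast hlen k)) x, hx, hg]⟩
  set l : List (Σ i, G i) :=
    List.ofFn (fun k : Fin L.length => ⟨c.get (Fin.cast hlen k), g k⟩) with hl
  have hmap : l.map Sigma.fst = c := by
    apply List.ext_get
    · simp [hl, hlen]
    · intro n h1 h2
      simp [hl]
  have hne1 : ∀ x ∈ l, Sigma.snd x ≠ 1 := by
    intro x hx
    rw [hl, List.mem_ofFn] at hx
    obtain ⟨k, rfl⟩ := hx
    intro h1
    exact hgnr k ⟨1, (map_one _).trans ((by simpa using h1 : g k = 1)).symm⟩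
  have hchain : l.Chain' fun a b => Sigma.fst a ≠ Sigma.fst b := by
    rw [List.Chain', ← List.isChain_map Sigma.fst, hmap]; exact halt
  set w : CoprodI.Word G := ⟨l, hne1, hchain⟩ with hw
  have hred : Reduced φ w := by
    intro x hx
    rw [hw] at hx
    simp only [hl, List.mem_ofFn] at hx
    obtain ⟨k, rfl⟩ := hx
    exact hgnr k
  have hprod : ofCoprodI w.prod = L.prod := by
    rw [CoprodI.Word.prod, hw]
    simp only [hl, map_list_prod, List.map_map, List.map_ofFn]
    have h1 : (⇑ofCoprodI ∘ (fun x => CoprodI.of x.snd) ∘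
        fun k : Fin L.length => (⟨c.get (Fin.cast hlen k), g k⟩ : (i : Bool) × G i)) = L.get :=
      funext fun k => by simpa [Function.comp, ofCoprodI_of] using hg k
    rw [h1, List.ofFn_get]
  have hempty : w = .empty := hred.eq_empty_of_mem_range hφ (by rw [hprod]; exact hC)
  have : l = [] := congrArg CoprodI.Word.toList hempty
  rw [hl, List.ofFn_eq_nil_iff] at this
  exact hne (List.length_eq_zero_iff.mp this)
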